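/- arXiv:hep-th/9608015 — 2 statements merged into one kernel-verified Lean document; each statement's English description precedes it below -/
import Mathlib

section
/- Let n ≥ 1 and let f, h ∈ Mₙ(ℂ) with f invertible, satisfying i(f† h − h† f) = 1ₙ. Set N := h f⁻¹ and let Im N := (N − N†)/(2i) denote its anti-hermitian part. Then f† (Im N) f = −(1/2)·1ₙ; equivalently Im N = −(1/2)(f f†)⁻¹. In particular Im N is an invertible, negative definite hermitian matrix. -/
open scoped Matrix ComplexOrder

/-- **The imaginary part of the kinetic matrix is fixed by the section condition.**
If `i(f†h − h†f) = 1` with `f` invertible and `N = h f⁻¹`, then the anti-hermitian part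
`Im N = (N − N†)/(2i)` satisfies `f† (Im N) f = −½·1`, equivalently
`Im N = −½ (f f†)⁻¹`; in particular `Im N` is invertible, hermitian and negative
definite. -/
theorem kinetic_matrix_imaginary_part
    {n : ℕ} (hn : 1 ≤ n)
    (f h : Matrix (Fin n) (Fin n) ℂ)
    (hf : IsUnit f)
    (hsec : Complex.I • (fᴴ * h - hᴴ * f) = 1)
    (N ImN : Matrix (Fin n) (Fin n) ℂ)
    (hN : N = h * f⁻¹)
    (hImN : ImN = (2 * Complex.I)⁻¹ • (N - Nᴴ)) :
    fᴴ * ImN * f = -(1 / 2 : ℂ) • 1 ∧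
    ImN = -(1 / 2 : ℂ) • (f * fᴴ)⁻¹ ∧
    IsUnit ImN ∧ ImN.IsHermitian ∧ (-ImN).PosDef := by
  have hdet : IsUnit f.det := (Matrix.isUnit_iff_isUnit_det f).mp hf
  have hdetH : IsUnit fᴴ.det := by
    rw [Matrix.det_conjTranspose]; exact hdet.star
  have hinv : f⁻¹ * f = 1 := Matrix.nonsing_inv_mul f hdet
  have hinv' : f * f⁻¹ = 1 := Matrix.mul_nonsing_inv f hdet
  -- section condition rewritten
  have hsec' : fᴴ * h - hᴴ * f = (-Complex.I) • 1 := by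
    have := congrArg (fun M => (-Complex.I) • M) hsec
    simp only [smul_smul] at this
    rw [neg_mul, Complex.I_mul_I, neg_neg, one_smul] at this
    exact this
  -- key computation
  have key1 : fᴴ * ImN * f = -(1 / 2 : ℂ) • 1 := by
    have hNf : fᴴ * N * f = fᴴ * h := by
      rw [hN, Matrix.mul_assoc fᴴ, Matrix.mul_assoc h, hinv, Matrix.mul_one]
    have hNHf : fᴴ * Nᴴ * f = hᴴ * f := by
      rw [hN, Matrix.conjTranspose_mul, ← Matrix.mul_assoc,
        ← Matrix.conjTranspose_mul, hinv, Matrix.conjTranspose_one, Matrix.one_mul]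
    have hc : ((2 : ℂ) * Complex.I)⁻¹ * (-Complex.I) = -(1 / 2 : ℂ) := by
      rw [mul_inv, Complex.inv_I]
      have : (-Complex.I) * (-Complex.I) = -1 := by
        rw [neg_mul_neg, Complex.I_mul_I]
      calc (2 : ℂ)⁻¹ * (-Complex.I) * (-Complex.I)
          = (2 : ℂ)⁻¹ * ((-Complex.I) * (-Complex.I)) := by ring
        _ = -(1 / 2 : ℂ) := by rw [this]; ring
    rw [hImN, Matrix.mul_smul, Matrix.smul_mul, Matrix.mul_sub, Matrix.sub_mul,
      hNf, hNHf, hsec', smul_smul, hc]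
  -- second form
  have key2 : ImN = -(1 / 2 : ℂ) • (f * fᴴ)⁻¹ := by
    have hId : (fᴴ)⁻¹ * (fᴴ * ImN * f) * f⁻¹ = ImN := by
      simp only [Matrix.mul_assoc]
      rw [hinv', Matrix.mul_one, Matrix.nonsing_inv_mul_cancel_left _ _ hdetH]
    rw [← hId, key1, Matrix.mul_smul, Matrix.smul_mul, Matrix.mul_one,
      Matrix.mul_inv_rev]
  -- positive definiteness of f fᴴ
  have hffH : (f * fᴴ).PosDef := by
    refine Matrix.PosDef.of_dotProduct_mulVec_pos (Matrix.isHermitian_mul_conjTranspose_self f) fun x hx => ?_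
    have hfHu : IsUnit fᴴ := (Matrix.isUnit_iff_isUnit_det _).mpr hdetH
    have hy : fᴴ *ᵥ x ≠ 0 := by
      intro h0
      exact hx ((Matrix.mulVec_injective_iff_isUnit.mpr hfHu)
        (h0.trans (Matrix.mulVec_zero fᴴ).symm))
    have heq : star x ⬝ᵥ (f * fᴴ) *ᵥ x = star (fᴴ *ᵥ x) ⬝ᵥ (fᴴ *ᵥ x) := by
      rw [← Matrix.mulVec_mulVec, Matrix.star_mulVec, Matrix.conjTranspose_conjTranspose,
        Matrix.dotProduct_mulVec]
    rw [heq]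
    exact Matrix.dotProduct_star_self_pos_iff.mpr hy
  have hinvPD : (f * fᴴ)⁻¹.PosDef := hffH.inv
  have h12 : (0 : ℂ) < (1 / 2 : ℂ) := by
    rw [Complex.lt_def]; norm_num
  have hpos : (-ImN).PosDef := by
    rw [key2, neg_smul, neg_neg]
    refine Matrix.PosDef.of_dotProduct_mulVec_pos ?_ fun x hx => ?_
    · show ((1 / 2 : ℂ) • (f * fᴴ)⁻¹)ᴴ = (1 / 2 : ℂ) • (f * fᴴ)⁻¹
      rw [Matrix.conjTranspose_smul, hinvPD.1.eq]
      norm_num [Complex.ext_iff]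
    · have hlt := hinvPD.dotProduct_mulVec_pos hx
      rw [Matrix.smul_mulVec, dotProduct_smul]
      calc (0 : ℂ) = (1 / 2 : ℂ) * 0 := by ring
        _ < (1 / 2 : ℂ) * (star x ⬝ᵥ (f * fᴴ)⁻¹ *ᵥ x) := mul_lt_mul_of_pos_left hlt h12
        _ = (1 / 2 : ℂ) • (star x ⬝ᵥ (f * fᴴ)⁻¹ *ᵥ x) := by rw [smul_eq_mul]
  have hherm : ImN.IsHermitian := by
    have := hpos.1
    rw [Matrix.IsHermitian, Matrix.conjTranspose_neg] at this
    exact neg_injective this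
  have hunit : IsUnit ImN := by
    have := hpos.isUnit
    simpa using this.neg
  exact ⟨key1, key2, hunit, hherm, hpos⟩
end

section
/- Let n ≥ 1 and let f, h ∈ Mₙ(ℂ) with f invertible, satisfying i(f† h − h† f) = 1ₙ and fᵀ h = hᵀ f. Set N := h f⁻¹, R := Re N = (N + conj(N))/2, I := Im N = (N − conj(N))/(2i) (so N is symmetric and I is invertible). Let g, e ∈ ℝⁿ and define the charge vector Z := fᵀ e − hᵀ g ∈ ℂⁿ and the symplectic charge vector P := (g; e) ∈ ℝ²ⁿ. Define the 2n×2n real symmetric matrix M := [[I + R I⁻¹ R, −R I⁻¹],[−I⁻¹ R, I⁻¹]]. Then the sum rule Z† Z = −(1/2) Pᵀ M P holds, i.e. Σ_k |Z_k|² = −(1/2) [ gᵀ(I + R I⁻¹ R)g − 2 eᵀ I⁻¹ R g + eᵀ I⁻¹ e ]. -/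
open scoped Matrix
open Complex

/-- **The D = 4 sum rule for central and matter charges.**
With coset representatives `(f, h)` satisfying the section conditions, kinetic matrix
`N = h f⁻¹` with real part `R` and imaginary part `I`, charges `Z = fᵀe − hᵀg`, symplectic
charge vector `P = (g; e)` and `M = [[I + R I⁻¹ R, −R I⁻¹],[−I⁻¹ R, I⁻¹]]`, one has
`Z† Z = −½ Pᵀ M P`. -/
theorem central_charge_sum_rule_D4
    {n : ℕ} (hn : 1 ≤ n)
    (f h : Matrix (Fin n) (Fin n) ℂ)
    (hf : IsUnit f)
    (hsec : Complex.I • (fᴴ * h - hᴴ * f) = 1)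
    (hsymp : fᵀ * h = hᵀ * f)
    (N R I : Matrix (Fin n) (Fin n) ℂ)
    (hN : N = h * f⁻¹)
    (hR : R = (1 / 2 : ℂ) • (N + N.map (starRingEnd ℂ)))
    (hI : I = (2 * Complex.I)⁻¹ • (N - N.map (starRingEnd ℂ)))
    (g e : Fin n → ℝ)
    (Z : Fin n → ℂ)
    (hZ : Z = fᵀ.mulVec (fun i => (e i : ℂ)) - hᵀ.mulVec (fun i => (g i : ℂ)))
    (P : Fin n ⊕ Fin n → ℂ)
    (hP : P = Sum.elim (fun i => (g i : ℂ)) (fun i => (e i : ℂ)))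
    (M : Matrix (Fin n ⊕ Fin n) (Fin n ⊕ Fin n) ℂ)
    (hM : M = Matrix.fromBlocks (I + R * I⁻¹ * R) (-(R * I⁻¹)) (-(I⁻¹ * R)) I⁻¹) :
    star Z ⬝ᵥ Z = -(1 / 2 : ℂ) * (P ⬝ᵥ M.mulVec P) := by
  have hfd : IsUnit f.det := (Matrix.isUnit_iff_isUnit_det f).mp hf
  have hfi : f⁻¹ * f = 1 := Matrix.nonsing_inv_mul f hfd
  have hfi' : f * f⁻¹ = 1 := Matrix.mul_nonsing_inv f hfd
  have hNf : N * f = h := by rw [hN, Matrix.mul_assoc, hfi, Matrix.mul_one]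
  have hhT : hᵀ = fᵀ * N := by
    have h1 : hᵀ * f = (fᵀ * N) * f := by
      rw [← hsymp, ← hNf, ← Matrix.mul_assoc]
    calc hᵀ = hᵀ * f * f⁻¹ := by rw [Matrix.mul_assoc, hfi', Matrix.mul_one]
    _ = (fᵀ * N) * f * f⁻¹ := by rw [h1]
    _ = fᵀ * N := by rw [Matrix.mul_assoc, hfi', Matrix.mul_one]
  have hNT : Nᵀ = N := by
    have h2 : h = Nᵀ * f := by
      have := congrArg Matrix.transpose hhT
      simpa [Matrix.transpose_mul] using this
    have h3 : Nᵀ * f = N * f := by rw [← h2, hNf]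
    calc Nᵀ = Nᵀ * f * f⁻¹ := by rw [Matrix.mul_assoc, hfi', Matrix.mul_one]
    _ = N * f * f⁻¹ := by rw [h3]
    _ = N := by rw [Matrix.mul_assoc, hfi', Matrix.mul_one]
  have hNc : N.map (starRingEnd ℂ) = Nᴴ := by
    ext i j
    rw [Matrix.map_apply, Matrix.conjTranspose_apply,
      show N j i = N i j from congrFun (congrFun hNT i) j]
    rfl
  have hNHT : (Nᴴ)ᵀ = Nᴴ := by
    rw [← hNc, ← Matrix.transpose_map]
    rw [hNT, hNc]
  -- section condition
  have hfH : IsUnit fᴴ := (Matrix.isUnit_conjTranspose f).mpr hf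
  have hfHd : IsUnit fᴴ.det := (Matrix.isUnit_iff_isUnit_det _).mp hfH
  have hfHi : (fᴴ)⁻¹ * fᴴ = 1 := Matrix.nonsing_inv_mul _ hfHd
  have hsec' : fᴴ * h - hᴴ * f = (-Complex.I) • (1 : Matrix (Fin n) (Fin n) ℂ) := by
    have := congrArg (fun X => (-Complex.I) • X) hsec
    simpa [smul_smul] using this
  have hkey : fᴴ * (N - Nᴴ) * f = (-Complex.I) • (1 : Matrix (Fin n) (Fin n) ℂ) := by
    rw [← hsec', ← hNf]
    rw [Matrix.conjTranspose_mul]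
    rw [Matrix.mul_sub, Matrix.sub_mul]
    rw [Matrix.mul_assoc fᴴ N f]
  have hdiff : N - Nᴴ = (-Complex.I) • ((fᴴ)⁻¹ * f⁻¹) := by
    have h4 : (fᴴ)⁻¹ * (fᴴ * (N - Nᴴ) * f) * f⁻¹ = N - Nᴴ := by
      rw [Matrix.mul_assoc ((fᴴ)⁻¹) _ (f⁻¹)]
      rw [Matrix.mul_assoc (fᴴ * (N - Nᴴ)) f (f⁻¹), hfi', Matrix.mul_one]
      rw [← Matrix.mul_assoc, hfHi, Matrix.one_mul]
    rw [← h4, hkey]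
    simp [Matrix.mul_smul, Matrix.smul_mul, Matrix.mul_assoc]
  set A : Matrix (Fin n) (Fin n) ℂ := f * fᴴ with hA
  have hAinv : A⁻¹ = (fᴴ)⁻¹ * f⁻¹ := Matrix.mul_inv_rev f fᴴ
  have hAu : IsUnit A := hf.mul hfH
  have hAd : IsUnit A.det := (Matrix.isUnit_iff_isUnit_det _).mp hAu
  have hAi : A⁻¹ * A = 1 := Matrix.nonsing_inv_mul _ hAd
  have hAi' : A * A⁻¹ = 1 := Matrix.mul_nonsing_inv _ hAd
  have hIA : I = (-(1/2 : ℂ)) • A⁻¹ := by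
    rw [hI, hNc, hdiff, hAinv, smul_smul]
    congr 1
    field_simp
  have hIinv : I⁻¹ = (-2 : ℂ) • A := by
    apply Matrix.inv_eq_left_inv
    rw [hIA, Matrix.smul_mul, Matrix.mul_smul, hAi', smul_smul]
    norm_num
  have hII : I⁻¹ * I = 1 := by
    rw [hIinv, hIA, Matrix.smul_mul, Matrix.mul_smul, hAi', smul_smul]
    norm_num
  have hII' : I * I⁻¹ = 1 := by
    rw [hIinv, hIA, Matrix.smul_mul, Matrix.mul_smul, hAi, smul_smul]
    norm_num
  -- symmetry of I
  have hIT : Iᵀ = I := by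
    rw [hI, Matrix.transpose_smul, Matrix.transpose_sub, hNT, ← Matrix.transpose_map, hNT]
  have hITinv : (I⁻¹)ᵀ = I⁻¹ := by
    rw [Matrix.transpose_nonsing_inv, hIT]
  -- decomposition N = R + i I, Nᴴ = R - i I
  have hNRI : N = R + Complex.I • I := by
    rw [hR, hI]
    match_scalars <;> field_simp <;> ring
  have hNH : Nᴴ = R - Complex.I • I := by
    rw [hR, hI, ← hNc]
    match_scalars <;> field_simp <;> ring
  -- the key matrix identity for fᵀ
  have hAI : A = (-(1/2 : ℂ)) • I⁻¹ := by
    have := congrArg (fun X => (-(1/2:ℂ)) • X) hIinv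
    simp only [smul_smul] at this
    norm_num at this
    rw [← this, neg_smul]
  have hfbar : (fᵀ)ᴴ * fᵀ = (-(1/2 : ℂ)) • I⁻¹ := by
    have hct : (fᵀ)ᴴ = (fᴴ)ᵀ := by ext i j; rfl
    have h5 : (fᵀ)ᴴ * fᵀ = Aᵀ := by
      rw [hA, Matrix.transpose_mul, hct]
    rw [h5, hAI, Matrix.transpose_smul, hITinv]
  -- vectors
  set ec : Fin n → ℂ := fun i => (e i : ℂ) with hec
  set gc : Fin n → ℂ := fun i => (g i : ℂ) with hgc
  have hsec_ec : star ec = ec := by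
    funext i
    simp [hec, Complex.conj_ofReal]
  have hsgc : star gc = gc := by
    funext i
    simp [hgc, Complex.conj_ofReal]
  set v : Fin n → ℂ := ec - N.mulVec gc with hv
  have hZv : Z = fᵀ.mulVec v := by
    rw [hZ, hv, Matrix.mulVec_sub, hhT, ← Matrix.mulVec_mulVec]
  have hsv : star v = ec - Nᴴ.mulVec gc := by
    rw [hv, star_sub, hsec_ec, Matrix.star_mulVec, hsgc]
    congr 1
    conv_rhs => rw [← hNHT, Matrix.mulVec_transpose]
  have hLHS : star Z ⬝ᵥ Z = -(1/2 : ℂ) * (star v ⬝ᵥ (I⁻¹.mulVec v)) := by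
    rw [hZv, Matrix.star_mulVec, Matrix.dotProduct_mulVec, Matrix.vecMul_vecMul, hfbar]
    rw [show (star v) ᵥ* ((-(1/2 : ℂ)) • I⁻¹) = (-(1/2 : ℂ)) • ((star v) ᵥ* I⁻¹) from by
      funext j; simp [Matrix.vecMul, dotProduct, Finset.mul_sum]; ring_nf]
    rw [smul_dotProduct, ← Matrix.dotProduct_mulVec, smul_eq_mul]
  rw [hLHS]
  congr 1
  -- now prove: star v ⬝ᵥ I⁻¹ *ᵥ v = P ⬝ᵥ M *ᵥ P
  have hcan1 : ∀ X : Matrix (Fin n) (Fin n) ℂ, I * (I⁻¹ * X) = X := fun X => by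
    rw [← Matrix.mul_assoc, hII', Matrix.one_mul]
  have m1 : I⁻¹ * N = I⁻¹ * R + Complex.I • 1 := by
    rw [hNRI, Matrix.mul_add, Matrix.mul_smul, hII]
  have m2 : Nᴴ * I⁻¹ = R * I⁻¹ - Complex.I • 1 := by
    rw [hNH, Matrix.sub_mul, Matrix.smul_mul, hII']
  have m3 : Nᴴ * (I⁻¹ * N) = R * (I⁻¹ * R) + I := by
    rw [m1, hNH]
    simp only [Matrix.mul_add, Matrix.sub_mul, Matrix.smul_mul, Matrix.mul_smul,
      Matrix.mul_one, hcan1, smul_smul, Complex.I_mul_I, neg_smul, one_smul]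
    match_scalars <;> simp [Complex.I_sq]
  have key : ∀ (C D : Matrix (Fin n) (Fin n) ℂ) (x y : Fin n → ℂ), Cᵀ = C →
      (C.mulVec x) ⬝ᵥ (D.mulVec y) = x ⬝ᵥ ((C * D).mulVec y) := by
    intro C D x y hC
    conv_lhs => rw [← hC, Matrix.mulVec_transpose]
    rw [Matrix.dotProduct_mulVec, Matrix.vecMul_vecMul, ← Matrix.dotProduct_mulVec]
  have e1 : star v ⬝ᵥ (I⁻¹.mulVec v) =
      ec ⬝ᵥ (I⁻¹.mulVec ec) - ec ⬝ᵥ ((I⁻¹ * N).mulVec gc)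
      - (gc ⬝ᵥ ((Nᴴ * I⁻¹).mulVec ec) - gc ⬝ᵥ ((Nᴴ * (I⁻¹ * N)).mulVec gc)) := by
    rw [hsv, hv]
    rw [Matrix.mulVec_sub, Matrix.mulVec_mulVec, dotProduct_sub, sub_dotProduct,
      sub_dotProduct]
    rw [key Nᴴ I⁻¹ gc ec hNHT, key Nᴴ (I⁻¹ * N) gc gc hNHT]
    ring
  rw [e1, m3, m1, m2]
  rw [hP, hM, Matrix.fromBlocks_mulVec, sumElim_dotProduct_sumElim]
  simp only [Matrix.add_mulVec, Matrix.sub_mulVec, Matrix.neg_mulVec, Matrix.smul_mulVec,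
    Matrix.one_mulVec, dotProduct_add, dotProduct_sub, dotProduct_neg, dotProduct_smul,
    smul_eq_mul, Matrix.mulVec_mulVec, Matrix.mul_assoc, Sum.elim_comp_inl, Sum.elim_comp_inr]
  rw [dotProduct_comm gc ec]
  ring
end
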